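/- Let P be a finitely generated abelian group and A ⊆ P a subgroup. Declare two intermediate subgroups B, B' (with A ⊆ B ⊆ P and A ⊆ B' ⊆ P) equivalent if there exists a group isomorphism B → B' restricting to the identity on A. Then the number of equivalence classes of intermediate subgroups is finite. -/

import Mathlib

open Submodule Module

section Split
variable {P Q : Type*} [AddCommGroup P] [AddCommGroup Q]
  [Module.Finite ℤ Q] [NoZeroSMulDivisors ℤ Q]

theorem aux_split (ψ : P →ₗ[ℤ] Q) (B : Submodule ℤ P) :
    ∃ e : B ≃ₗ[ℤ] (↥(B ⊓ LinearMap.ker ψ) × ↥(B.map ψ)),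
      (∀ x (hx : x ∈ B ⊓ LinearMap.ker ψ), e ⟨x, hx.1⟩ = (⟨x, hx⟩, 0)) ∧
      (∀ x (hx : x ∈ B ⊓ LinearMap.ker ψ), e.symm (⟨x, hx⟩, 0) = ⟨x, hx.1⟩) := by
  haveI : IsNoetherian ℤ Q := isNoetherian_of_isNoetherianRing_of_finite ℤ Q
  haveI : Module.Finite ℤ (B.map ψ) := Module.Finite.iff_fg.mpr (IsNoetherian.noetherian _)
  haveI : Module.Free ℤ (B.map ψ) := Module.free_of_finite_type_torsion_free'
  set ρ : B →ₗ[ℤ] ↥(B.map ψ) :=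
    LinearMap.codRestrict (B.map ψ) (ψ.domRestrict B) (fun b => mem_map_of_mem b.2) with hρ
  have hρval : ∀ b : B, (ρ b : Q) = ψ (b : P) := fun b => rfl
  have hsurj : Function.Surjective ρ := by
    rintro ⟨q, hq⟩
    obtain ⟨x, hx, rfl⟩ := hq
    exact ⟨⟨x, hx⟩, rfl⟩
  obtain ⟨s, hs⟩ := Module.projective_lifting_property ρ LinearMap.id hsurj
  have hρs : ∀ q, ρ (s q) = q := fun q => by
    have := congrArg (fun f => f q) hs; simpa using this
  have hψs : ∀ q, ψ ((s q : B) : P) = (q : Q) := fun q => by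
    rw [← hρval, hρs]
  -- the map B →ₗ N × BQ
  have hmem : ∀ b : B, (b : P) - ((s (ρ b) : B) : P) ∈ B ⊓ LinearMap.ker ψ := by
    intro b
    refine ⟨sub_mem b.2 (s (ρ b)).2, ?_⟩
    simp only [SetLike.mem_coe, LinearMap.mem_ker, map_sub, hψs, hρval, sub_self]
  set f₁ : B →ₗ[ℤ] ↥(B ⊓ LinearMap.ker ψ) :=
    LinearMap.codRestrict _ (B.subtype - (B.subtype ∘ₗ s ∘ₗ ρ)) hmem with hf₁
  set f : B →ₗ[ℤ] ↥(B ⊓ LinearMap.ker ψ) × ↥(B.map ψ) := LinearMap.prod f₁ ρ with hf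
  set g : ↥(B ⊓ LinearMap.ker ψ) × ↥(B.map ψ) →ₗ[ℤ] B :=
    LinearMap.coprod (Submodule.inclusion inf_le_left) s with hg
  have hcr : ∀ b : B, ((LinearMap.codRestrict _ (B.subtype - (B.subtype ∘ₗ s ∘ₗ ρ)) hmem b :
      ↥(B ⊓ LinearMap.ker ψ)) : P) = (b : P) - ((s (ρ b) : B) : P) := fun b => rfl
  have hgf : ∀ b : B, g (f b) = b := by
    intro b
    apply Subtype.ext
    simp [hg, hf, hf₁, Submodule.coe_inclusion, hcr]
  have hρker : ∀ (c : ↥(B ⊓ LinearMap.ker ψ)), ρ (Submodule.inclusion inf_le_left c) = 0 := by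
    intro c
    apply Subtype.ext
    simp only [hρval, ZeroMemClass.coe_zero]
    exact c.2.2
  have hfg : ∀ cq, f (g cq) = cq := by
    rintro ⟨c, q⟩
    have h2 : ρ (g (c, q)) = q := by
      simp only [hg, LinearMap.coprod_apply, map_add, hρker, hρs, zero_add]
    refine Prod.ext (Subtype.ext ?_) h2
    simp [hf, hf₁, hg, hρker, hρs, hcr]
  refine ⟨LinearEquiv.ofLinear f g (LinearMap.ext hfg) (LinearMap.ext hgf), ?_, ?_⟩
  · intro x hx
    have hρx : ρ ⟨x, hx.1⟩ = 0 := by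
      apply Subtype.ext
      simpa [hρval] using hx.2
    refine Prod.ext (Subtype.ext ?_) ?_
    · simp [f, f₁, hρx, hcr]
    · simpa [f] using hρx
  · intro x hx
    apply Subtype.ext
    simp [g]
theorem aux_equiv (ψ : P →ₗ[ℤ] Q) (B B' : Submodule ℤ P)
    (h0 : B ⊓ LinearMap.ker ψ = B' ⊓ LinearMap.ker ψ)
    (hr : Module.finrank ℤ (B.map ψ) = Module.finrank ℤ (B'.map ψ)) :
    ∃ e : B ≃ₗ[ℤ] B', ∀ x (hx : x ∈ B ⊓ LinearMap.ker ψ),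
      ((e ⟨x, hx.1⟩ : B') : P) = x := by
  haveI : IsNoetherian ℤ Q := isNoetherian_of_isNoetherianRing_of_finite ℤ Q
  haveI : Module.Finite ℤ (B.map ψ) := Module.Finite.iff_fg.mpr (IsNoetherian.noetherian _)
  haveI : Module.Free ℤ (B.map ψ) := Module.free_of_finite_type_torsion_free'
  haveI : Module.Finite ℤ (B'.map ψ) := Module.Finite.iff_fg.mpr (IsNoetherian.noetherian _)
  haveI : Module.Free ℤ (B'.map ψ) := Module.free_of_finite_type_torsion_free'
  obtain ⟨e₁, he₁, -⟩ := aux_split ψ B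
  obtain ⟨e₂, -, he₂⟩ := aux_split ψ B'
  set eb : ↥(B.map ψ) ≃ₗ[ℤ] ↥(B'.map ψ) :=
    (Module.finBasis ℤ ↥(B.map ψ)).equiv (Module.finBasis ℤ ↥(B'.map ψ)) (finCongr hr) with heb
  set mid : (↥(B ⊓ LinearMap.ker ψ) × ↥(B.map ψ)) ≃ₗ[ℤ]
      (↥(B' ⊓ LinearMap.ker ψ) × ↥(B'.map ψ)) :=
    (LinearEquiv.ofEq _ _ h0).prodCongr eb with hmid
  refine ⟨e₁.trans (mid.trans e₂.symm), ?_⟩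
  intro x hx
  have hx' : x ∈ B' ⊓ LinearMap.ker ψ := h0 ▸ hx
  have step1 : e₁ ⟨x, hx.1⟩ = (⟨x, hx⟩, 0) := he₁ x hx
  have step2 : mid (⟨x, hx⟩, 0) = (⟨x, hx'⟩, 0) := by
    simp [hmid]
    rfl
  have step3 : e₂.symm (⟨x, hx'⟩, 0) = ⟨x, hx'.1⟩ := he₂ x hx'
  simp [LinearEquiv.trans_apply, step1, step2, step3]

end Split

theorem aux_Icc_finite {P : Type*} [AddCommGroup P] (A K : Submodule ℤ P) (hAK : A ≤ K)
    (hfin : Finite ↥(K.map A.mkQ)) : Finite ↥(Set.Icc A K) := by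
  let F : ↥(Set.Icc A K) → Set ↥(K.map A.mkQ) := fun C =>
    {t | (t : P ⧸ A) ∈ A.mkQ '' (C.1 : Set P)}
  have hFmem : ∀ (C : ↥(Set.Icc A K)) (t : ↥(K.map A.mkQ)),
      t ∈ F C ↔ (t : P ⧸ A) ∈ A.mkQ '' (C.1 : Set P) := fun C t => Iff.rfl
  have hinj : Function.Injective F := by
    intro C C' h
    have key : ∀ (D D' : ↥(Set.Icc A K)), F D = F D' → D.1 ≤ D'.1 := by
      intro D D' hDD x hx
      have hxK : x ∈ K := D.2.2 hx
      have ht : (⟨A.mkQ x, Submodule.mem_map_of_mem hxK⟩ : ↥(K.map A.mkQ)) ∈ F D :=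
        (hFmem _ _).mpr ⟨x, hx, rfl⟩
      rw [hDD] at ht
      obtain ⟨y, hy, hyx⟩ := (hFmem _ _).mp ht
      have hyx' : A.mkQ y = A.mkQ x := hyx
      have hsub : y - x ∈ A := by
        rwa [Submodule.mkQ_apply, Submodule.mkQ_apply, Submodule.Quotient.eq] at hyx'
      have hA : x - y ∈ D'.1 := D'.2.1 (by simpa using A.neg_mem hsub)
      simpa using D'.1.add_mem hA hy
    exact Subtype.ext (le_antisymm (key C C' h) (key C' C h.symm))
  haveI : Finite (Set ↥(K.map A.mkQ)) := inferInstance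
  exact Finite.of_injective F hinj

theorem aux_main {P : Type*} [AddCommGroup P] [Module.Finite ℤ P] (A : Submodule ℤ P) :
    ∃ (k : ℕ) (reps : Fin k → Submodule ℤ P) (hreps : ∀ i, A ≤ reps i),
      ∀ B : Submodule ℤ P, ∀ hB : A ≤ B,
        ∃ (i : Fin k) (e : B ≃ₗ[ℤ] reps i),
          ∀ x, ∀ hx : x ∈ A, ((e ⟨x, hB hx⟩ : ↥(reps i)) : P) = x := by
  classical
  haveI : IsNoetherian ℤ P := isNoetherian_of_isNoetherianRing_of_finite ℤ P
  set M := P ⧸ A with hM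
  haveI : Module.Finite ℤ M := Module.Finite.of_surjective A.mkQ (Submodule.Quotient.mk_surjective _)
  haveI : IsNoetherian ℤ M := isNoetherian_of_isNoetherianRing_of_finite ℤ M
  set T : Submodule ℤ M := Submodule.torsion ℤ M with hT
  haveI : Module.Finite ℤ ↥T := Module.Finite.iff_fg.mpr (IsNoetherian.noetherian _)
  haveI hTfin : Finite ↥T := Module.finite_of_fg_torsion ↥T (Submodule.torsion_isTorsion)
  haveI : Module.Finite ℤ (M ⧸ T) :=
    Module.Finite.of_surjective T.mkQ (Submodule.Quotient.mk_surjective _)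
  set ψ : P →ₗ[ℤ] (M ⧸ T) := T.mkQ ∘ₗ A.mkQ with hψ
  set K := LinearMap.ker ψ with hK
  have hAK : A ≤ K := by
    intro a ha
    have h1 : A.mkQ a = 0 := by
      rw [Submodule.mkQ_apply, Submodule.Quotient.mk_eq_zero]; exact ha
    simp only [hK, hψ, LinearMap.mem_ker, LinearMap.comp_apply, h1, map_zero]
  have hKcomap : K = Submodule.comap A.mkQ T := by
    rw [hK, hψ, LinearMap.ker_comp, Submodule.ker_mkQ]
  have hmapK : K.map A.mkQ ≤ T := by
    rw [hKcomap]; exact Submodule.map_comap_le _ _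
  haveI : Finite ↥(K.map A.mkQ) :=
    Finite.of_injective (Submodule.inclusion hmapK) (Submodule.inclusion_injective _)
  haveI hIcc : Finite ↥(Set.Icc A K) := aux_Icc_finite A K hAK inferInstance
  set n := Module.finrank ℤ (M ⧸ T) with hn
  have hrank : ∀ B : Submodule ℤ P, Module.finrank ℤ (B.map ψ) ≤ n := fun B =>
    Submodule.finrank_le _
  set I := ↥(Set.Icc A K) × Fin (n + 1) with hI
  haveI : Finite I := inferInstance
  haveI : Fintype I := Fintype.ofFinite I
  set inv : Submodule ℤ P → I := fun B =>
    (⟨(B ⊓ K) ⊔ A, le_sup_right, sup_le inf_le_right hAK⟩,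
     ⟨min (Module.finrank ℤ (B.map ψ)) n, Nat.lt_succ_of_le (min_le_right _ _)⟩) with hinv
  have hinv1 : ∀ B : Submodule ℤ P, A ≤ B → ((inv B).1 : Submodule ℤ P) = B ⊓ K := by
    intro B hB
    simp only [hinv]
    exact sup_eq_left.mpr (le_inf hB hAK)
  have hinv2 : ∀ B : Submodule ℤ P, ((inv B).2 : ℕ) = Module.finrank ℤ (B.map ψ) := by
    intro B
    simp only [hinv]
    exact min_eq_left (hrank B)
  set rep : I → Submodule ℤ P := fun i =>
    if h : ∃ B, A ≤ B ∧ inv B = i then h.choose else A with hrep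
  have hrepA : ∀ i, A ≤ rep i := by
    intro i
    simp only [hrep]
    split
    · next h => exact h.choose_spec.1
    · exact le_rfl
  set enum : Fin (Fintype.card I) ≃ I := (Fintype.equivFin I).symm with henum
  refine ⟨Fintype.card I, fun j => rep (enum j), fun j => hrepA _, ?_⟩
  intro B hB
  refine ⟨enum.symm (inv B), ?_⟩
  have hrw : rep (enum (enum.symm (inv B))) = rep (inv B) := by rw [Equiv.apply_symm_apply]
  have hex : ∃ B', A ≤ B' ∧ inv B' = inv B := ⟨B, hB, rfl⟩
  have hrepB : rep (inv B) = hex.choose := by simp only [hrep]; rw [dif_pos hex]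
  obtain ⟨hA₁, hinvEq⟩ := hex.choose_spec
  set B₁ := hex.choose with hB₁
  have hEq : B₁ = rep (enum (enum.symm (inv B))) := by rw [hrw, hrepB]
  have h0 : B ⊓ K = B₁ ⊓ K := by
    have h1 := congrArg (fun p : I => (p.1 : Submodule ℤ P)) hinvEq
    simp only [hinv] at h1
    have e1 : B₁ ⊓ K ⊔ A = B₁ ⊓ K := sup_eq_left.mpr (le_inf hA₁ hAK)
    have e2 : B ⊓ K ⊔ A = B ⊓ K := sup_eq_left.mpr (le_inf hB hAK)
    rw [e1, e2] at h1
    exact h1.symm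
  have hr : Module.finrank ℤ (B.map ψ) = Module.finrank ℤ (B₁.map ψ) := by
    have h1 := congrArg (fun p : I => ((p.2 : Fin (n+1)) : ℕ)) hinvEq
    simp only [hinv] at h1
    have e1 : Module.finrank ℤ (B₁.map ψ) ⊓ n = Module.finrank ℤ (B₁.map ψ) :=
      inf_eq_left.mpr (hrank B₁)
    have e2 : Module.finrank ℤ (B.map ψ) ⊓ n = Module.finrank ℤ (B.map ψ) :=
      inf_eq_left.mpr (hrank B)
    rw [e1, e2] at h1
    exact h1.symm
  haveI : NoZeroSMulDivisors ℤ (M ⧸ T) := ⟨fun h => by simpa using h⟩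
  obtain ⟨e, he⟩ := aux_equiv ψ B B₁ h0 hr
  refine ⟨e.trans (LinearEquiv.ofEq _ _ hEq), ?_⟩
  intro x hx
  have h2 := he x ⟨hB hx, hAK hx⟩
  simpa [LinearEquiv.trans_apply, LinearEquiv.coe_ofEq_apply] using h2

def mulEquivOfLinear {P : Type*} [CommGroup P] {B B' : Subgroup P}
    (e : (AddSubgroup.toIntSubmodule (Subgroup.toAddSubgroup B)) ≃ₗ[ℤ]
         (AddSubgroup.toIntSubmodule (Subgroup.toAddSubgroup B'))) : B ≃* B' where
  toFun b := ⟨Additive.toMul ((e ⟨Additive.ofMul (b : P), b.2⟩ : Additive P)),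
    (e ⟨Additive.ofMul (b : P), b.2⟩).2⟩
  invFun b := ⟨Additive.toMul ((e.symm ⟨Additive.ofMul (b : P), b.2⟩ : Additive P)),
    (e.symm ⟨Additive.ofMul (b : P), b.2⟩).2⟩
  left_inv b := by
    apply Subtype.ext
    exact congrArg Subtype.val (e.symm_apply_apply ⟨Additive.ofMul (b : P), b.2⟩)
  right_inv b := by
    apply Subtype.ext
    exact congrArg Subtype.val (e.apply_symm_apply ⟨Additive.ofMul (b : P), b.2⟩)
  map_mul' x y := by
    apply Subtype.ext
    exact congrArg Subtype.val (e.map_add ⟨Additive.ofMul (x : P), x.2⟩ ⟨Additive.ofMul (y : P), y.2⟩)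

/-- Let `P` be a finitely generated abelian group and `A ⊆ P` a subgroup. Up to
isomorphisms restricting to the identity on `A`, there are only finitely many
subgroups `B` with `A ⊆ B ⊆ P`. -/
theorem finitely_many_intermediate_subgroups_up_to_iso_rel_A
    (P : Type*) [CommGroup P] [Group.FG P] (A : Subgroup P) :
    ∃ (k : ℕ) (reps : Fin k → Subgroup P) (hreps : ∀ i, A ≤ reps i),
      ∀ B : Subgroup P, (hB : A ≤ B) →
        ∃ (i : Fin k) (φ : B ≃* reps i),
          ∀ a, (ha : a ∈ A) → (φ ⟨a, hB ha⟩ : P) = a := by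
  classical
  haveI : Module.Finite ℤ (Additive P) := Module.Finite.iff_addGroup_fg.mpr inferInstance
  obtain ⟨k, reps', hreps', H⟩ :=
    aux_main (P := Additive P) (AddSubgroup.toIntSubmodule (Subgroup.toAddSubgroup A))
  refine ⟨k, fun i => Subgroup.toAddSubgroup.symm (AddSubgroup.toIntSubmodule.symm (reps' i)),
    fun i x hx => hreps' i hx, ?_⟩
  intro B hB
  obtain ⟨i, e, he⟩ := H (AddSubgroup.toIntSubmodule (Subgroup.toAddSubgroup B)) (fun x hx => hB hx)
  have hre : AddSubgroup.toIntSubmodule (Subgroup.toAddSubgroup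
      (Subgroup.toAddSubgroup.symm (AddSubgroup.toIntSubmodule.symm (reps' i)))) = reps' i := by
    simp
  refine ⟨i, mulEquivOfLinear (e.trans (LinearEquiv.ofEq _ _ hre.symm)), ?_⟩
  intro a ha
  have h1 := he (Additive.ofMul a) (by exact ha)
  show ((e.trans (LinearEquiv.ofEq _ _ hre.symm)) ⟨Additive.ofMul a, hB ha⟩ : Additive P) = Additive.ofMul a
  rw [LinearEquiv.trans_apply, LinearEquiv.coe_ofEq_apply]
  exact h1
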